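/- Fix k ≥ 1 and letters a₁,…,a_k ∈ Σ with a_i ≠ a_{i+1} for all 1 ≤ i < k. The MOn-1qfa A[a₁,…,a_k] recognizes the language L[a₁,…,a_k] = Σ* a₁ Σ* ⋯ Σ* a_k Σ* with cut-point λ = 2^{−(2k+1)} isolated by δ = 2^{−2(k+1)}; more precisely, p_{A[a₁,…,a_k]}(w) ≥ 2^{−2k} for every w ∈ L[a₁,…,a_k], and p_{A[a₁,…,a_k]}(w) = 0 for every w ∉ L[a₁,…,a_k]. -/

import Mathlib

open Matrix

/-- A Measure-Only one-way quantum finite automaton (MOn-1qfa) over the alphabet `σ`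
(the letter `none` plays the role of the end-marker `#`).  The data consists of:
the number of states `m`, for each letter `c` (and the end-marker) the number `k c`
of distinct eigenvalues of the observable `O_c`, the eigenvalues `eig c` themselves,
the corresponding orthogonal projectors `P c`, the initial (row) vector `init`,
and the set `F` of (indices of) accepting eigenvalues of the end-marker observable. -/
structure MOnQFA (σ : Type) where
  m : ℕ
  k : Option σ → ℕ
  eig : (c : Option σ) → Fin (k c) → ℝ
  P : (c : Option σ) → Fin (k c) → Matrix (Fin m) (Fin m) ℂ
  init : Matrix (Fin 1) (Fin m) ℂ
  F : Finset (Fin (k none))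

namespace MOnQFA

variable {σ : Type}

/-- Well-formedness of a MOn-1qfa: the eigenvalues of each observable are distinct,
the `P c j` are pairwise orthogonal Hermitian idempotents (orthogonal projectors)
summing to the identity (so that `O_c = ∑ j, eig c j • P c j` is a Hermitian matrix
with spectral decomposition given by the data), and the initial vector has norm 1. -/
def Valid (A : MOnQFA σ) : Prop :=
  (∀ c, Function.Injective (A.eig c)) ∧
  (∀ c j, (A.P c j)ᴴ = A.P c j) ∧
  (∀ c j, A.P c j * A.P c j = A.P c j) ∧
  (∀ c j j', j ≠ j' → A.P c j * A.P c j' = 0) ∧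
  (∀ c, ∑ j, A.P c j = 1) ∧
  (∑ i, Complex.normSq (A.init 0 i) = 1)

/-- The density matrix `σ(w)` reached after reading the word `w`:
`σ(ε) = π₀† π₀` and `σ(yc) = ∑ j, P_j(c) σ(y) P_j(c)`. -/
noncomputable def dens (A : MOnQFA σ) (w : List σ) : Matrix (Fin A.m) (Fin A.m) ℂ :=
  w.foldl (fun ρ c => ∑ j, A.P (some c) j * ρ * A.P (some c) j) (A.initᴴ * A.init)

/-- The acceptance probability `p_A(w) = Tr (∑_{j ∈ F} P_j(#) σ(w) P_j(#))`. -/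
noncomputable def prob (A : MOnQFA σ) (w : List σ) : ℝ :=
  (Matrix.trace (∑ j ∈ A.F, A.P none j * A.dens w * A.P none j)).re

end MOnQFA

/-- `LMO σ` : the class of languages recognized by some MOn-1qfa over `σ`
with an isolated cut-point. -/
def LMO (σ : Type) : Set (Set (List σ)) :=
  {L | ∃ A : MOnQFA σ, A.Valid ∧ ∃ lam δ : ℝ, 0 < lam ∧ 0 < δ ∧
        (∀ w, |A.prob w - lam| ≥ δ) ∧ L = {w | A.prob w > lam}}

/-- `PMO σ` : the class of probabilistic events induced by MOn-1qfas over `σ`. -/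
def PMO (σ : Type) : Set (List σ → ℝ) :=
  {φ | ∃ A : MOnQFA σ, A.Valid ∧ φ = A.prob}

/-- The "up" orthogonal projector `P↗(α)` of dimension `(k+1)×(k+1)` associated with
the word `as = a₁⋯a_k` and the letter `α`: writing `j₁^{(α)} < ⋯ < j_{#α}^{(α)}` for
the (1-based) positions of `α` in `as`, the entry `(r,s)` is `1` if `r = s` and `r`
belongs to no block `{jᵢ^{(α)}, jᵢ^{(α)}+1}`, `1/2` if `r` and `s` belong to a common
block `{jᵢ^{(α)}, jᵢ^{(α)}+1}`, and `0` otherwise.  (Indices here are 0-based: the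
block of a 0-based position `q` with `as.get q = α` is `{q, q+1}`.) -/
noncomputable def upProj {σ : Type} [DecidableEq σ] (as : List σ) (α : σ) :
    Matrix (Fin (as.length + 1)) (Fin (as.length + 1)) ℝ :=
  Matrix.of fun r s =>
    if ∃ q : Fin as.length, as.get q = α ∧
        (r = q.castSucc ∨ r = q.succ) ∧ (s = q.castSucc ∨ s = q.succ) then 1 / 2
    else if r = s then 1 else 0

/-- The "down" orthogonal projector `P↘(α)` of dimension `(k+1)×(k+1)` associated
with the word `as = a₁⋯a_k` and the letter `α`: the entry `(r,s)` is `1/2` if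
`r = s` and `r` belongs to some block `{jᵢ^{(α)}, jᵢ^{(α)}+1}`, `-1/2` if `r ≠ s` and
`r, s` belong to a common block, and `0` otherwise. -/
noncomputable def downProj {σ : Type} [DecidableEq σ] (as : List σ) (α : σ) :
    Matrix (Fin (as.length + 1)) (Fin (as.length + 1)) ℝ :=
  Matrix.of fun r s =>
    if ∃ q : Fin as.length, as.get q = α ∧
        (r = q.castSucc ∨ r = q.succ) ∧ (s = q.castSucc ∨ s = q.succ) then
      (if r = s then 1 / 2 else -(1 / 2))
    else 0

/-- The first standard basis row vector `e₁ ∈ ℝ^{1×(k+1)}`. -/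
noncomputable def e1 {n : ℕ} : Matrix (Fin 1) (Fin (n + 1)) ℝ :=
  Matrix.of fun _ i => if i = 0 then 1 else 0

/-- The MOn-1qfa `A[a₁,…,a_k]` over `Σ` associated with letters `as = a₁⋯a_k`
(with `aᵢ ≠ aᵢ₊₁`): it has `k+1` states, initial state `e₁`, for `α ∈ {a₁,…,a_k}` the
observable with spectral projectors `P↗(α)` and `P↘(α)`, for `c ∉ {a₁,…,a_k}` the
identity observable, and end-marker observable whose single accepting projector is
`P_acc = e_{k+1}ᵀ e_{k+1}`. -/
noncomputable def AutoPT {σ : Type} [DecidableEq σ] (as : List σ) : MOnQFA σ where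
  m := as.length + 1
  k := fun _ => 2
  eig := fun _ j => if j = 0 then 1 else 0
  P := fun c j =>
    match c with
    | none =>
        if j = 0 then
          Matrix.single (Fin.last as.length) (Fin.last as.length) (1 : ℂ)
        else
          1 - Matrix.single (Fin.last as.length) (Fin.last as.length) (1 : ℂ)
    | some a =>
        if a ∈ as then
          (if j = 0 then (upProj as a).map (fun x => (x : ℂ))
           else (downProj as a).map (fun x => (x : ℂ)))
        else (if j = 0 then 1 else 0)
  init := Matrix.of fun _ i => if i = 0 then 1 else 0
  F := {0}

section AuxProof

variable {σ : Type} [DecidableEq σ]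

/-- membership of `r` in the block `{q, q+1}`. -/
abbrev Blk {n : ℕ} (q : Fin n) (r : Fin (n + 1)) : Prop := r = q.castSucc ∨ r = q.succ

lemma blk_coe {n : ℕ} {q : Fin n} {r : Fin (n + 1)} (h : Blk q r) :
    (r : ℕ) = q ∨ (r : ℕ) = q + 1 := by
  rcases h with h | h <;> subst h <;> simp

lemma blk_iff {n : ℕ} (q : Fin n) (r : Fin (n + 1)) :
    Blk q r ↔ ((r : ℕ) = q ∨ (r : ℕ) = q + 1) := by
  constructor
  · exact blk_coe
  · rintro (h | h)
    · left; exact Fin.ext (by simpa using h)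
    · right; exact Fin.ext (by simpa using h)

lemma chain_ne (as : List σ) (hch : as.Chain' (· ≠ ·)) (q q' : Fin as.length)
    (h : (q : ℕ) + 1 = (q' : ℕ)) : as.get q ≠ as.get q' := by
  have hch : ∀ (i : Nat) (_hi : i + 1 < as.length), as[i] ≠ as[i + 1] :=
    List.isChain_iff_getElem.mp hch
  have h2 : (q : ℕ) < as.length - 1 := by have := q'.isLt; omega
  have h3 := hch (q : ℕ) (by omega)
  have e2 : as.get ⟨(q : ℕ) + 1, by have := q'.isLt; omega⟩ = as.get q' := by
    congr 1
    exact Fin.ext h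
  rw [← e2]
  exact h3

lemma blk_uniq {as : List σ} (hch : as.Chain' (· ≠ ·)) {c : σ} {q q' : Fin as.length}
    (hq : as.get q = c) (hq' : as.get q' = c) {r : Fin (as.length + 1)}
    (h1 : Blk q r) (h2 : Blk q' r) : q = q' := by
  rcases blk_coe h1 with e1 | e1 <;> rcases blk_coe h2 with e2 | e2
  · exact Fin.ext (by omega)
  · exact absurd (hq'.trans hq.symm) (chain_ne as hch q' q (by omega))
  · exact absurd (hq.trans hq'.symm) (chain_ne as hch q q' (by omega))
  · exact Fin.ext (by omega)

lemma upProj_blk {as : List σ} (hch : as.Chain' (· ≠ ·)) {c : σ} {q : Fin as.length}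
    (hq : as.get q = c) {r : Fin (as.length + 1)} (hr : Blk q r) (t : Fin (as.length + 1)) :
    upProj as c r t = if Blk q t then 1 / 2 else 0 := by
  by_cases hB : Blk q t
  · have hex : ∃ q' : Fin as.length, as.get q' = c ∧ Blk q' r ∧ Blk q' t := ⟨q, hq, hr, hB⟩
    rw [upProj, Matrix.of_apply, if_pos hex, if_pos hB]
  · have hex : ¬∃ q' : Fin as.length, as.get q' = c ∧ Blk q' r ∧ Blk q' t := by
      rintro ⟨q', hg, hr', ht'⟩
      exact hB (blk_uniq hch hg hq hr' hr ▸ ht')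
    have hrt : r ≠ t := fun h => hB (h ▸ hr)
    rw [upProj, Matrix.of_apply, if_neg hex, if_neg hB, if_neg hrt]

lemma downProj_blk {as : List σ} (hch : as.Chain' (· ≠ ·)) {c : σ} {q : Fin as.length}
    (hq : as.get q = c) {r : Fin (as.length + 1)} (hr : Blk q r) (t : Fin (as.length + 1)) :
    downProj as c r t = if Blk q t then (if r = t then 1 / 2 else -(1 / 2)) else 0 := by
  by_cases hB : Blk q t
  · have hex : ∃ q' : Fin as.length, as.get q' = c ∧ Blk q' r ∧ Blk q' t := ⟨q, hq, hr, hB⟩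
    rw [downProj, Matrix.of_apply, if_pos hex, if_pos hB]
  · have hex : ¬∃ q' : Fin as.length, as.get q' = c ∧ Blk q' r ∧ Blk q' t := by
      rintro ⟨q', hg, hr', ht'⟩
      exact hB (blk_uniq hch hg hq hr' hr ▸ ht')
    rw [downProj, Matrix.of_apply, if_neg hex, if_neg hB]

lemma upProj_free {as : List σ} {c : σ} {r : Fin (as.length + 1)}
    (hfree : ∀ q : Fin as.length, as.get q = c → ¬ Blk q r) (t : Fin (as.length + 1)) :
    upProj as c r t = if r = t then 1 else 0 := by
  have hex : ¬∃ q' : Fin as.length, as.get q' = c ∧ Blk q' r ∧ Blk q' t := by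
    rintro ⟨q', hg, hr', _⟩
    exact hfree q' hg hr'
  rw [upProj, Matrix.of_apply, if_neg hex]

lemma downProj_free {as : List σ} {c : σ} {r : Fin (as.length + 1)}
    (hfree : ∀ q : Fin as.length, as.get q = c → ¬ Blk q r) (t : Fin (as.length + 1)) :
    downProj as c r t = 0 := by
  have hex : ¬∃ q' : Fin as.length, as.get q' = c ∧ Blk q' r ∧ Blk q' t := by
    rintro ⟨q', hg, hr', _⟩
    exact hfree q' hg hr'
  rw [downProj, Matrix.of_apply, if_neg hex]

lemma upProj_symm (as : List σ) (c : σ) (r s : Fin (as.length + 1)) :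
    upProj as c r s = upProj as c s r := by
  simp only [upProj, Matrix.of_apply]
  refine if_congr ?_ rfl (if_congr eq_comm rfl rfl)
  constructor <;> (rintro ⟨q, h1, h2, h3⟩; exact ⟨q, h1, h3, h2⟩)

lemma downProj_eq (as : List σ) (c : σ) : downProj as c = 1 - upProj as c := by
  ext r s
  simp only [downProj, upProj, Matrix.sub_apply, Matrix.one_apply, Matrix.of_apply]
  split_ifs <;> norm_num

lemma upProj_idem {as : List σ} (hch : as.Chain' (· ≠ ·)) (c : σ) :
    upProj as c * upProj as c = upProj as c := by
  ext r s
  rw [Matrix.mul_apply]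
  by_cases h : ∃ q : Fin as.length, as.get q = c ∧ Blk q r
  · obtain ⟨q, hq, hr⟩ := h
    have hne : (q.castSucc : Fin (as.length + 1)) ≠ q.succ := ne_of_lt (Fin.castSucc_lt_succ (i := q))
    rw [Fintype.sum_eq_add q.castSucc q.succ hne (fun t ht => by
      rw [upProj_blk hch hq hr t, if_neg (by rintro (h | h); exacts [ht.1 h, ht.2 h]), zero_mul])]
    rw [upProj_blk hch hq hr q.castSucc, if_pos (Or.inl rfl),
        upProj_blk hch hq hr q.succ, if_pos (Or.inr rfl),
        upProj_blk hch hq (Or.inl rfl : Blk q q.castSucc) s,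
        upProj_blk hch hq (Or.inr rfl : Blk q q.succ) s,
        upProj_blk hch hq hr s]
    split_ifs <;> norm_num
  · simp only [not_exists, not_and] at h
    have h1 : ∀ t, upProj as c r t * upProj as c t s
        = if r = t then upProj as c t s else 0 := fun t => by
      rw [upProj_free h t]; split_ifs <;> ring
    rw [Finset.sum_congr rfl fun t _ => h1 t, Finset.sum_ite_eq]
    simp

/-- the evolution of the diagonal entries of the density matrix when reading letter `c`. -/
noncomputable def stepv (as : List σ) (c : σ) (d : Fin (as.length + 1) → ℝ)
    (r : Fin (as.length + 1)) : ℝ :=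
  if h : ∃ q : Fin as.length, as.get q = c ∧ Blk q r
  then (d h.choose.castSucc + d h.choose.succ) / 2
  else d r

lemma stepv_blk {as : List σ} (hch : as.Chain' (· ≠ ·)) {c : σ} {q : Fin as.length}
    (hq : as.get q = c) {r : Fin (as.length + 1)} (hr : Blk q r)
    (d : Fin (as.length + 1) → ℝ) :
    stepv as c d r = (d q.castSucc + d q.succ) / 2 := by
  have hex : ∃ q' : Fin as.length, as.get q' = c ∧ Blk q' r := ⟨q, hq, hr⟩
  rw [stepv, dif_pos hex]
  obtain ⟨h1, h2⟩ := hex.choose_spec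
  rw [show hex.choose = q from blk_uniq hch h1 hq h2 hr]

lemma stepv_free {as : List σ} {c : σ} {r : Fin (as.length + 1)}
    (hfree : ∀ q : Fin as.length, as.get q = c → ¬ Blk q r)
    (d : Fin (as.length + 1) → ℝ) : stepv as c d r = d r := by
  rw [stepv, dif_neg]
  rintro ⟨q', hg, hr'⟩
  exact hfree q' hg hr'

lemma conj_step {as : List σ} (hch : as.Chain' (· ≠ ·)) (c : σ)
    (d : Fin (as.length + 1) → ℝ) :
    upProj as c * Matrix.diagonal d * upProj as c
      + downProj as c * Matrix.diagonal d * downProj as c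
      = Matrix.diagonal (stepv as c d) := by
  ext r s
  have expand : ∀ M N : Matrix (Fin (as.length + 1)) (Fin (as.length + 1)) ℝ,
      (M * Matrix.diagonal d * N) r s = ∑ t, M r t * d t * N t s := fun M N => by
    rw [Matrix.mul_apply]
    exact Finset.sum_congr rfl fun t _ => by rw [Matrix.mul_diagonal]
  rw [Matrix.add_apply, Matrix.diagonal_apply, expand, expand]
  by_cases h : ∃ q : Fin as.length, as.get q = c ∧ Blk q r
  · obtain ⟨q, hq, hr⟩ := h
    have hne : (q.castSucc : Fin (as.length + 1)) ≠ q.succ := ne_of_lt (Fin.castSucc_lt_succ (i := q))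
    have hu := upProj_blk hch hq hr
    have hd := downProj_blk hch hq hr
    have huL := upProj_blk hch hq (Or.inl rfl : Blk q q.castSucc)
    have huR := upProj_blk hch hq (Or.inr rfl : Blk q q.succ)
    have hdL := downProj_blk hch hq (Or.inl rfl : Blk q q.castSucc)
    have hdR := downProj_blk hch hq (Or.inr rfl : Blk q q.succ)
    rw [Fintype.sum_eq_add q.castSucc q.succ hne (fun t ht => by
          rw [hu t, if_neg (by rintro (h | h); exacts [ht.1 h, ht.2 h]), zero_mul, zero_mul]),
        Fintype.sum_eq_add q.castSucc q.succ hne (fun t ht => by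
          rw [hd t, if_neg (by rintro (h | h); exacts [ht.1 h, ht.2 h]), zero_mul, zero_mul])]
    simp only [hu, huL, huR, hd, hdL, hdR, stepv_blk hch hq hr d]
    by_cases hs : Blk q s
    · rcases hr with rfl | rfl <;> rcases hs with rfl | rfl <;>
        (simp [Blk, hne, hne.symm]; try ring)
    · have hrs : r ≠ s := fun hE => hs (hE ▸ hr)
      simp [hs, hrs]
  · simp only [not_exists, not_and] at h
    have h1 : ∀ t, upProj as c r t * d t * upProj as c t s
        = if r = t then d t * upProj as c t s else 0 := fun t => by
      rw [upProj_free h t]; split_ifs <;> ring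
    have h2 : ∀ t, downProj as c r t * d t * downProj as c t s = 0 := fun t => by
      rw [downProj_free h t]; ring
    rw [Finset.sum_congr rfl fun t _ => h1 t, Finset.sum_congr rfl fun t _ => h2 t,
        Finset.sum_ite_eq, Finset.sum_const_zero, upProj_free h s, stepv_free h d]
    simp only [Finset.mem_univ, if_true, add_zero]
    split_ifs <;> ring

end AuxProof
section AuxProof2

variable {σ : Type} [DecidableEq σ]

lemma cmap_mul {n : ℕ} (M N : Matrix (Fin n) (Fin n) ℝ) :
    (M * N).map (fun x : ℝ => (x : ℂ))
      = M.map (fun x : ℝ => (x : ℂ)) * N.map (fun x : ℝ => (x : ℂ)) := by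
  have h : (fun x : ℝ => (x : ℂ)) = ⇑Complex.ofRealHom := rfl
  rw [h, Matrix.map_mul]

lemma cmap_add {n : ℕ} (M N : Matrix (Fin n) (Fin n) ℝ) :
    (M + N).map (fun x : ℝ => (x : ℂ))
      = M.map (fun x : ℝ => (x : ℂ)) + N.map (fun x : ℝ => (x : ℂ)) := by
  ext i j
  simp [Matrix.map_apply, Matrix.add_apply]

lemma cmap_one_sub {n : ℕ} (M : Matrix (Fin n) (Fin n) ℝ) :
    (1 - M).map (fun x : ℝ => (x : ℂ)) = 1 - M.map (fun x : ℝ => (x : ℂ)) := by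
  ext i j
  simp only [Matrix.map_apply, Matrix.sub_apply, Matrix.one_apply, Complex.ofReal_sub]
  split_ifs <;> simp

lemma cmap_herm {n : ℕ} (M : Matrix (Fin n) (Fin n) ℝ) (hM : ∀ i j, M i j = M j i) :
    (M.map (fun x : ℝ => (x : ℂ)))ᴴ = M.map (fun x : ℝ => (x : ℂ)) := by
  ext i j
  simp only [Matrix.conjTranspose_apply, Matrix.map_apply, Complex.star_def,
    Complex.conj_ofReal]
  exact congrArg _ (hM j i)

/-- the projectors of `AutoPT as`, with their types stated explicitly. -/
noncomputable def APm (as : List σ) (c : Option σ) (j : Fin 2) :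
    Matrix (Fin (as.length + 1)) (Fin (as.length + 1)) ℂ :=
  (AutoPT as).P c j

lemma APm_none0 (as : List σ) :
    APm as none 0
      = Matrix.single (Fin.last as.length) (Fin.last as.length) (1 : ℂ) := rfl

lemma APm_none1 (as : List σ) :
    APm as none 1
      = 1 - Matrix.single (Fin.last as.length) (Fin.last as.length) (1 : ℂ) := rfl

lemma APm_some0 (as : List σ) (c : σ) :
    APm as (some c) 0
      = if c ∈ as then (upProj as c).map (fun x : ℝ => (x : ℂ)) else 1 := by
  by_cases h : c ∈ as <;> simp [APm, AutoPT, h]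

lemma APm_some1 (as : List σ) (c : σ) :
    APm as (some c) 1
      = if c ∈ as then (downProj as c).map (fun x : ℝ => (x : ℂ)) else 0 := by
  by_cases h : c ∈ as <;> simp [APm, AutoPT, h]

lemma autoPT_step (as : List σ) (hch : as.Chain' (· ≠ ·)) (c : σ)
    (d : Fin (as.length + 1) → ℝ) :
    (∑ j : Fin 2, APm as (some c) j
        * (Matrix.diagonal d).map (fun x : ℝ => (x : ℂ)) * APm as (some c) j)
      = (Matrix.diagonal (stepv as c d)).map (fun x : ℝ => (x : ℂ)) := by
  rw [Fin.sum_univ_two, APm_some0, APm_some1]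
  by_cases hc : c ∈ as
  · rw [if_pos hc, if_pos hc, ← cmap_mul, ← cmap_mul, ← cmap_mul, ← cmap_mul, ← cmap_add,
      conj_step hch c d]
  · rw [if_neg hc, if_neg hc, one_mul, mul_one, zero_mul, mul_zero, add_zero]
    have hst : stepv as c d = d := funext fun r =>
      stepv_free (fun q hq _ => hc (by rw [← hq]; exact as.get_mem q)) d
    rw [hst]

lemma dens_foldl (as : List σ) (hch : as.Chain' (· ≠ ·)) :
    ∀ (w : List σ) (d : Fin (as.length + 1) → ℝ),
    w.foldl (fun ρ c => ∑ j : Fin 2, APm as (some c) j * ρ * APm as (some c) j)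
        ((Matrix.diagonal d).map (fun x : ℝ => (x : ℂ)))
      = (Matrix.diagonal (w.foldl (fun d c => stepv as c d) d)).map (fun x : ℝ => (x : ℂ))
  | [], d => rfl
  | c :: w, d => by
      rw [List.foldl_cons, List.foldl_cons, autoPT_step as hch c d]
      exact dens_foldl as hch w (stepv as c d)

/-- the diagonal of the density matrix of `AutoPT as` after reading `w`. -/
noncomputable def dvec (as : List σ) (w : List σ) : Fin (as.length + 1) → ℝ :=
  w.foldl (fun d c => stepv as c d) (fun i => if i = 0 then 1 else 0)

lemma autoPT_dens (as : List σ) (hch : as.Chain' (· ≠ ·)) (w : List σ) :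
    (AutoPT as).dens w
      = (Matrix.diagonal (dvec as w)).map (fun x : ℝ => (x : ℂ)) := by
  have hinit : (AutoPT as).initᴴ * (AutoPT as).init
      = (Matrix.diagonal (fun i : Fin (as.length + 1) => if i = 0 then (1 : ℝ) else 0)).map
          (fun x : ℝ => (x : ℂ)) := by
    ext (i : Fin (as.length + 1)) (j : Fin (as.length + 1))
    change ((Matrix.of fun (_ : Fin 1) (i : Fin (as.length + 1)) => if i = 0 then (1 : ℂ) else 0)ᴴ
      * Matrix.of fun (_ : Fin 1) (i : Fin (as.length + 1)) => if i = 0 then (1 : ℂ) else 0) i j = _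
    simp only [AutoPT, Matrix.mul_apply, Matrix.conjTranspose_apply, Matrix.map_apply,
      Matrix.diagonal_apply, Matrix.of_apply, Fin.sum_univ_one]
    split_ifs <;> simp_all
  simp only [MOnQFA.dens]
  rw [hinit]
  exact dens_foldl as hch w _

lemma std_eq_diag {n : ℕ} :
    Matrix.single (Fin.last n) (Fin.last n) (1 : ℂ)
      = Matrix.diagonal (fun i => if i = Fin.last n then (1 : ℂ) else 0) := by
  ext i j
  by_cases hij : i = j
  · subst hij
    by_cases hi : i = Fin.last n
    · simp [Matrix.single, Matrix.diagonal_apply, hi]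
    · simp [Matrix.single, Matrix.diagonal_apply, hi, Ne.symm hi]
  · have hno : ¬(Fin.last n = i ∧ Fin.last n = j) := fun ⟨h1, h2⟩ => hij (h1 ▸ h2 ▸ rfl)
    simp [Matrix.single, Matrix.diagonal_apply, hij, hno]

lemma autoPT_prob (as : List σ) (hch : as.Chain' (· ≠ ·)) (w : List σ) :
    (AutoPT as).prob w = dvec as w (Fin.last as.length) := by
  have key : (Matrix.trace (∑ j ∈ ({0} : Finset (Fin 2)),
      APm as none j
        * ((Matrix.diagonal (dvec as w)).map (fun x : ℝ => (x : ℂ)))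
        * APm as none j)).re = dvec as w (Fin.last as.length) := by
    rw [Finset.sum_singleton, APm_none0 as, std_eq_diag,
      Matrix.diagonal_map (by simp : ((0:ℝ):ℂ) = 0), Matrix.diagonal_mul_diagonal,
      Matrix.diagonal_mul_diagonal, Matrix.trace_diagonal]
    have h1 : ∀ i : Fin (as.length + 1),
        (if i = Fin.last as.length then (1 : ℂ) else 0) * ((dvec as w i : ℝ) : ℂ)
          * (if i = Fin.last as.length then (1 : ℂ) else 0)
        = if i = Fin.last as.length then ((dvec as w i : ℝ) : ℂ) else 0 := fun i => by
      split_ifs <;> ring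
    rw [Finset.sum_congr rfl fun i _ => h1 i, Finset.sum_ite_eq']
    simp
  simp only [MOnQFA.prob]
  rw [autoPT_dens as hch w]
  exact key

end AuxProof2
section AuxProof3

variable {σ : Type} [DecidableEq σ]

/-- greedy matching level update. -/
def levStep (as : List σ) (l : ℕ) (c : σ) : ℕ :=
  if h : l < as.length then (if as.get ⟨l, h⟩ = c then l + 1 else l) else l

lemma levStep_le {as : List σ} {l : ℕ} (h : l ≤ as.length) (c : σ) :
    levStep as l c ≤ as.length := by
  unfold levStep; split_ifs <;> omega

lemma le_levStep (as : List σ) (l : ℕ) (c : σ) : l ≤ levStep as l c := by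
  unfold levStep; split_ifs <;> omega

lemma foldl_levStep_le {as : List σ} :
    ∀ (w : List σ) {l : ℕ}, l ≤ as.length → w.foldl (levStep as) l ≤ as.length
  | [], _, h => h
  | c :: w, l, h => foldl_levStep_le w (levStep_le h c)

lemma le_foldl_levStep {as : List σ} :
    ∀ (w : List σ) (l : ℕ), l ≤ w.foldl (levStep as) l
  | [], _ => le_rfl
  | c :: w, l => (le_levStep as l c).trans (le_foldl_levStep w _)

lemma levStep_greedy {as : List σ} :
    ∀ (w : List σ) (l : ℕ), l ≤ as.length → (as.drop l).Sublist w →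
      w.foldl (levStep as) l = as.length
  | [], l, hl, hsub => by
      have h1 : as.drop l = [] := List.sublist_nil.mp hsub
      have h2 := List.drop_eq_nil_iff.mp h1
      simp only [List.foldl_nil]
      omega
  | c :: w, l, hl, hsub => by
      rw [List.foldl_cons]
      by_cases hlt : l < as.length
      · have hd : as.drop l = as.get ⟨l, hlt⟩ :: as.drop (l + 1) := by
          rw [List.drop_eq_getElem_cons hlt]
          rfl
        rw [hd] at hsub
        by_cases heq : as.get ⟨l, hlt⟩ = c
        · have hstep : levStep as l c = l + 1 := by
            unfold levStep; rw [dif_pos hlt, if_pos heq]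
          rw [hstep]
          refine levStep_greedy w (l + 1) (by omega) ?_
          cases hsub with
          | cons _ h => exact List.sublist_of_cons_sublist h
          | cons_cons _ h => exact h
        · have hstep : levStep as l c = l := by
            unfold levStep; rw [dif_pos hlt, if_neg heq]
          rw [hstep]
          refine levStep_greedy w l hl ?_
          rw [hd]
          cases hsub with
          | cons _ h => exact h
          | cons_cons _ h => exact absurd rfl heq
      · have hstep : levStep as l c = l := by unfold levStep; rw [dif_neg hlt]
        rw [hstep]
        refine levStep_greedy w l hl ?_
        have h1 : as.drop l = [] := List.drop_eq_nil_of_le (by omega)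
        rw [h1]
        exact List.nil_sublist w

lemma levStep_sound {as : List σ} :
    ∀ (w : List σ) (l : ℕ), l ≤ as.length →
      ((as.take (w.foldl (levStep as) l)).drop l).Sublist w
  | [], l, hl => by
      simp only [List.foldl_nil]
      have h1 : (as.take l).length ≤ l := by
        rw [List.length_take]; omega
      rw [List.drop_eq_nil_of_le h1]
  | c :: w, l, hl => by
      rw [List.foldl_cons]
      by_cases hlt : l < as.length
      · by_cases heq : as.get ⟨l, hlt⟩ = c
        · have hstep : levStep as l c = l + 1 := by
            unfold levStep; rw [dif_pos hlt, if_pos heq]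
          rw [hstep]
          have hL : l + 1 ≤ w.foldl (levStep as) (l + 1) := le_foldl_levStep w _
          have hlen : l < (as.take (w.foldl (levStep as) (l + 1))).length := by
            rw [List.length_take]
            have := foldl_levStep_le (as := as) w (show l + 1 ≤ as.length by omega)
            omega
          rw [List.drop_eq_getElem_cons hlen]
          have hget : (as.take (w.foldl (levStep as) (l + 1)))[l]'hlen = c := by
            rw [List.getElem_take]
            exact heq
          rw [hget]
          exact List.Sublist.cons₂ c (levStep_sound w (l + 1) (by omega))
        · have hstep : levStep as l c = l := by
            unfold levStep; rw [dif_pos hlt, if_neg heq]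
          rw [hstep]
          exact List.Sublist.cons c (levStep_sound w l hl)
      · have hstep : levStep as l c = l := by unfold levStep; rw [dif_neg hlt]
        rw [hstep]
        exact List.Sublist.cons c (levStep_sound w l hl)

/-- the invariant maintained along the run of `AutoPT`. -/
def GInv (as : List σ) (l : ℕ) (d : Fin (as.length + 1) → ℝ) : Prop :=
  (∀ i j : Fin (as.length + 1), (i : ℕ) ≤ (j : ℕ) → d j ≤ d i) ∧
  (∀ i : Fin (as.length + 1), l < (i : ℕ) → d i = 0) ∧
  (∀ i : Fin (as.length + 1), (i : ℕ) = l → ((1 : ℝ) / 4) ^ l ≤ d i)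

lemma GInv_init (as : List σ) :
    GInv as 0 (fun i : Fin (as.length + 1) => if i = 0 then 1 else 0) := by
  refine ⟨?_, ?_, ?_⟩
  · intro i j hij
    by_cases hj : j = (0 : Fin (as.length + 1))
    · have hi : i = 0 := by
        have hj0 : (j : ℕ) = 0 := by rw [hj]; rfl
        exact Fin.ext (by omega)
      simp [hi, hj]
    · by_cases hi : i = (0 : Fin (as.length + 1)) <;> simp [hi, hj] <;> norm_num
  · intro i hi
    have : i ≠ 0 := by
      intro h
      rw [h] at hi
      simp at hi
    simp [this]
  · intro i hi
    have : i = 0 := Fin.ext (by simpa using hi)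
    simp [this]

lemma GInv_step {as : List σ} (hch : as.Chain' (· ≠ ·)) (c : σ) {l : ℕ}
    {d : Fin (as.length + 1) → ℝ} (h : GInv as l d) :
    GInv as (levStep as l c) (stepv as c d) := by
  obtain ⟨hmono, hzero, hlow⟩ := h
  refine ⟨?_, ?_, ?_⟩
  · -- monotonicity
    intro i j hij
    by_cases hi : ∃ q : Fin as.length, as.get q = c ∧ Blk q i
    · obtain ⟨q, hq, hbi⟩ := hi
      rw [stepv_blk hch hq hbi]
      have hqi := blk_coe hbi
      have m1 : d q.succ ≤ d q.castSucc :=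
        hmono _ _ (by simp only [Fin.coe_castSucc, Fin.val_succ]; omega)
      by_cases hj : ∃ q' : Fin as.length, as.get q' = c ∧ Blk q' j
      · obtain ⟨q', hq', hbj⟩ := hj
        rw [stepv_blk hch hq' hbj]
        have hqj := blk_coe hbj
        by_cases hqq : q = q'
        · subst hqq; exact le_rfl
        · have hadj : (q' : ℕ) + 1 ≠ (q : ℕ) :=
            fun hE => chain_ne as hch q' q hE (hq'.trans hq.symm)
          have hvne : (q : ℕ) ≠ (q' : ℕ) := fun hE => hqq (Fin.ext hE)
          have m2 : d q'.succ ≤ d q'.castSucc :=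
            hmono _ _ (by simp only [Fin.coe_castSucc, Fin.val_succ]; omega)
          have m3 : d q'.castSucc ≤ d q.succ :=
            hmono _ _ (by simp only [Fin.coe_castSucc, Fin.val_succ]; omega)
          linarith
      · simp only [not_exists, not_and] at hj
        rw [stepv_free hj]
        have hnb : ¬((j : ℕ) = (q : ℕ) ∨ (j : ℕ) = (q : ℕ) + 1) :=
          fun hE => hj q hq ((blk_iff q j).mpr hE)
        have m3 : d j ≤ d q.succ := hmono _ _ (by simp only [Fin.val_succ]; omega)
        linarith
    · simp only [not_exists, not_and] at hi
      rw [stepv_free hi]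
      by_cases hj : ∃ q' : Fin as.length, as.get q' = c ∧ Blk q' j
      · obtain ⟨q', hq', hbj⟩ := hj
        rw [stepv_blk hch hq' hbj]
        have hqj := blk_coe hbj
        have hnb : ¬((i : ℕ) = (q' : ℕ) ∨ (i : ℕ) = (q' : ℕ) + 1) :=
          fun hE => hi q' hq' ((blk_iff q' i).mpr hE)
        have m2 : d q'.succ ≤ d q'.castSucc :=
          hmono _ _ (by simp only [Fin.coe_castSucc, Fin.val_succ]; omega)
        have m3 : d q'.castSucc ≤ d i := hmono _ _ (by simp only [Fin.coe_castSucc]; omega)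
        linarith
      · simp only [not_exists, not_and] at hj
        rw [stepv_free hj]
        exact hmono i j hij
  · -- vanishing above the level
    intro i hi
    have hls := le_levStep as l c
    by_cases hb : ∃ q : Fin as.length, as.get q = c ∧ Blk q i
    · obtain ⟨q, hq, hbi⟩ := hb
      rw [stepv_blk hch hq hbi]
      have hqi := blk_coe hbi
      have hq1 : l < (q : ℕ) := by
        by_contra hle
        push_neg at hle
        have hql : (q : ℕ) = l := by omega
        have hlt : l < as.length := hql ▸ q.isLt
        have hfire : levStep as l c = l + 1 := by
          unfold levStep
          rw [dif_pos hlt, if_pos (by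
            rw [show (⟨l, hlt⟩ : Fin as.length) = q from Fin.ext hql.symm]
            exact hq)]
        omega
      have z1 : d q.castSucc = 0 := hzero _ (by simp only [Fin.coe_castSucc]; omega)
      have z2 : d q.succ = 0 := hzero _ (by simp only [Fin.val_succ]; omega)
      rw [z1, z2]
      norm_num
    · simp only [not_exists, not_and] at hb
      rw [stepv_free hb]
      exact hzero i (by omega)
  · -- lower bound at the level
    intro i hi
    have hup : ∀ (q : Fin as.length), as.get q = c → Blk q i → (q : ℕ) + 1 = (i : ℕ) →
        (i : ℕ) = l → (1 / 4 : ℝ) ^ l ≤ stepv as c d i := by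
      intro q hq hbi hqi hil
      rw [stepv_blk hch hq hbi]
      have l1 : (1 / 4 : ℝ) ^ l ≤ d q.succ := by
        have e : q.succ = i := Fin.ext (by simp only [Fin.val_succ]; omega)
        rw [e]
        exact hlow i hil
      have m1 : d q.succ ≤ d q.castSucc :=
        hmono _ _ (by simp only [Fin.coe_castSucc, Fin.val_succ]; omega)
      linarith
    by_cases hlt : l < as.length
    · by_cases heq : as.get ⟨l, hlt⟩ = c
      · have hstep : levStep as l c = l + 1 := by
          unfold levStep; rw [dif_pos hlt, if_pos heq]
        rw [hstep] at hi ⊢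
        set q : Fin as.length := ⟨l, hlt⟩ with hqdef
        have hbi : Blk q i := (blk_iff q i).mpr (Or.inr (by simp [hqdef]; omega))
        rw [stepv_blk hch heq hbi]
        have l1 : (1 / 4 : ℝ) ^ l ≤ d q.castSucc := hlow _ (by simp [hqdef])
        have z2 : d q.succ = 0 := hzero _ (by simp [hqdef, Fin.val_succ])
        have hp : (0 : ℝ) ≤ (1 / 4 : ℝ) ^ l := by positivity
        rw [z2, pow_succ]
        linarith
      · have hstep : levStep as l c = l := by
          unfold levStep; rw [dif_pos hlt, if_neg heq]
        rw [hstep] at hi ⊢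
        by_cases hb : ∃ q : Fin as.length, as.get q = c ∧ Blk q i
        · obtain ⟨q, hq, hbi⟩ := hb
          have hco := blk_coe hbi
          have hql : (q : ℕ) ≠ l := by
            intro hE
            exact heq (by
              rw [show (⟨l, hlt⟩ : Fin as.length) = q from Fin.ext hE.symm]
              exact hq)
          exact hup q hq hbi (by omega) hi
        · simp only [not_exists, not_and] at hb
          rw [stepv_free hb]
          exact hlow i hi
    · have hstep : levStep as l c = l := by unfold levStep; rw [dif_neg hlt]
      rw [hstep] at hi ⊢
      by_cases hb : ∃ q : Fin as.length, as.get q = c ∧ Blk q i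
      · obtain ⟨q, hq, hbi⟩ := hb
        have hco := blk_coe hbi
        have hql : (q : ℕ) ≠ l := by have := q.isLt; omega
        exact hup q hq hbi (by omega) hi
      · simp only [not_exists, not_and] at hb
        rw [stepv_free hb]
        exact hlow i hi

lemma GInv_foldl {as : List σ} (hch : as.Chain' (· ≠ ·)) :
    ∀ (w : List σ) (l : ℕ) (d : Fin (as.length + 1) → ℝ), GInv as l d →
      GInv as (w.foldl (levStep as) l) (w.foldl (fun d c => stepv as c d) d)
  | [], _, _, h => h
  | c :: w, l, d, h => by
      rw [List.foldl_cons, List.foldl_cons]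
      exact GInv_foldl hch w _ _ (GInv_step hch c h)

end AuxProof3
section AuxProof4

variable {σ : Type} [DecidableEq σ]

lemma fin2_cases (j : Fin 2) : j = 0 ∨ j = 1 := by
  rcases j with ⟨jv, hj⟩
  interval_cases jv
  · exact Or.inl rfl
  · exact Or.inr rfl

lemma proj_compl {n : ℕ} {p : Matrix (Fin n) (Fin n) ℂ} (h : p * p = p) :
    (1 - p) * (1 - p) = 1 - p ∧ p * (1 - p) = 0 ∧ (1 - p) * p = 0 := by
  refine ⟨?_, ?_, ?_⟩
  · rw [sub_mul, one_mul, mul_sub, mul_one, h]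
    abel
  · rw [mul_sub, mul_one, h, sub_self]
  · rw [sub_mul, one_mul, h, sub_self]

lemma std_herm (n : ℕ) :
    (Matrix.single (Fin.last n) (Fin.last n) (1 : ℂ))ᴴ
      = Matrix.single (Fin.last n) (Fin.last n) (1 : ℂ) := by
  ext i j
  simp only [Matrix.conjTranspose_apply, Matrix.single, Matrix.of_apply,
    apply_ite (star : ℂ → ℂ), star_one, star_zero]
  split_ifs with h1 h2 <;> first | rfl | (exfalso; tauto)

lemma std_idem (n : ℕ) :
    Matrix.single (Fin.last n) (Fin.last n) (1 : ℂ)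
        * Matrix.single (Fin.last n) (Fin.last n) (1 : ℂ)
      = Matrix.single (Fin.last n) (Fin.last n) (1 : ℂ) := by
  rw [Matrix.single_mul_single_same, one_mul]

lemma cup_herm (as : List σ) (c : σ) :
    ((upProj as c).map (fun x : ℝ => (x : ℂ)))ᴴ = (upProj as c).map (fun x : ℝ => (x : ℂ)) :=
  cmap_herm _ (fun i j => upProj_symm as c i j)

lemma cup_idem {as : List σ} (hch : as.Chain' (· ≠ ·)) (c : σ) :
    (upProj as c).map (fun x : ℝ => (x : ℂ)) * (upProj as c).map (fun x : ℝ => (x : ℂ))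
      = (upProj as c).map (fun x : ℝ => (x : ℂ)) := by
  rw [← cmap_mul, upProj_idem hch]

lemma cdn_eq (as : List σ) (c : σ) :
    (downProj as c).map (fun x : ℝ => (x : ℂ))
      = 1 - (upProj as c).map (fun x : ℝ => (x : ℂ)) := by
  rw [downProj_eq, cmap_one_sub]

lemma APm_herm (as : List σ) : ∀ (c : Option σ) (j : Fin 2), (APm as c j)ᴴ = APm as c j := by
  intro c j
  match c with
  | none =>
    rcases fin2_cases j with rfl | rfl
    · rw [APm_none0]; exact std_herm as.length
    · rw [APm_none1, Matrix.conjTranspose_sub, Matrix.conjTranspose_one, std_herm]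
  | some a =>
    by_cases ha : a ∈ as
    · rcases fin2_cases j with rfl | rfl
      · rw [APm_some0, if_pos ha]; exact cup_herm as a
      · rw [APm_some1, if_pos ha, cdn_eq, Matrix.conjTranspose_sub,
          Matrix.conjTranspose_one, cup_herm]
    · rcases fin2_cases j with rfl | rfl
      · rw [APm_some0, if_neg ha, Matrix.conjTranspose_one]
      · rw [APm_some1, if_neg ha, Matrix.conjTranspose_zero]

lemma APm_idem (as : List σ) (hch : as.Chain' (· ≠ ·)) :
    ∀ (c : Option σ) (j : Fin 2), APm as c j * APm as c j = APm as c j := by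
  intro c j
  match c with
  | none =>
    rcases fin2_cases j with rfl | rfl
    · rw [APm_none0]; exact std_idem as.length
    · rw [APm_none1]; exact (proj_compl (std_idem as.length)).1
  | some a =>
    by_cases ha : a ∈ as
    · rcases fin2_cases j with rfl | rfl
      · rw [APm_some0, if_pos ha]; exact cup_idem hch a
      · rw [APm_some1, if_pos ha, cdn_eq]; exact (proj_compl (cup_idem hch a)).1
    · rcases fin2_cases j with rfl | rfl
      · rw [APm_some0, if_neg ha, one_mul]
      · rw [APm_some1, if_neg ha, mul_zero]

lemma APm_orth (as : List σ) (hch : as.Chain' (· ≠ ·)) :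
    ∀ (c : Option σ) (j j' : Fin 2), j ≠ j' → APm as c j * APm as c j' = 0 := by
  have key : ∀ c : Option σ, APm as c 0 * APm as c 1 = 0 ∧ APm as c 1 * APm as c 0 = 0 := by
    intro c
    match c with
    | none =>
      rw [APm_none0, APm_none1]
      exact ⟨(proj_compl (std_idem as.length)).2.1, (proj_compl (std_idem as.length)).2.2⟩
    | some a =>
      by_cases ha : a ∈ as
      · rw [APm_some0, APm_some1, if_pos ha, if_pos ha, cdn_eq]
        exact ⟨(proj_compl (cup_idem hch a)).2.1, (proj_compl (cup_idem hch a)).2.2⟩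
      · rw [APm_some0, APm_some1, if_neg ha, if_neg ha]
        exact ⟨mul_zero 1, zero_mul 1⟩
  intro c j j' hjj
  rcases fin2_cases j with rfl | rfl <;> rcases fin2_cases j' with rfl | rfl
  · exact absurd rfl hjj
  · exact (key c).1
  · exact (key c).2
  · exact absurd rfl hjj

lemma APm_sum (as : List σ) :
    ∀ c : Option σ, (∑ j : Fin 2, APm as c j) = 1 := by
  intro c
  rw [Fin.sum_univ_two]
  match c with
  | none =>
    rw [APm_none0, APm_none1]
    abel
  | some a =>
    by_cases ha : a ∈ as
    · rw [APm_some0, APm_some1, if_pos ha, if_pos ha, cdn_eq]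
      abel
    · rw [APm_some0, APm_some1, if_neg ha, if_neg ha, add_zero]

lemma eig_inj : ∀ (j j' : Fin 2),
    (if j = 0 then (1 : ℝ) else 0) = (if j' = 0 then (1 : ℝ) else 0) → j = j' := by
  intro j j' h
  rcases fin2_cases j with rfl | rfl <;> rcases fin2_cases j' with rfl | rfl <;> simp_all

lemma autoPT_norm (as : List σ) :
    ∑ i : Fin (as.length + 1), Complex.normSq ((AutoPT as).init 0 i) = 1 := by
  simp [AutoPT, apply_ite Complex.normSq, Finset.sum_ite_eq']

lemma autoPT_valid (as : List σ) (hch : as.Chain' (· ≠ ·)) : (AutoPT as).Valid := by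
  refine ⟨?_, ?_, ?_, ?_, ?_, ?_⟩
  · exact fun c j j' h => eig_inj j j' h
  · exact fun c j => APm_herm as c j
  · exact fun c j => APm_idem as hch c j
  · exact fun c j j' hjj => APm_orth as hch c j j' hjj
  · exact fun c => APm_sum as c
  · exact autoPT_norm as

lemma quarter_eq (n : ℕ) : ((1 : ℝ) / 4) ^ n = (2 : ℝ) ^ (-(2 * (n : ℤ))) := by
  have h1 : (2 : ℝ) ^ (-(2 * (n : ℤ))) = ((2 : ℝ) ^ (2 * n : ℕ))⁻¹ := by
    rw [← zpow_natCast (2 : ℝ) (2 * n), ← _root_.zpow_neg]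
    congr 1
  rw [one_div, inv_pow, h1, pow_mul]
  norm_num

end AuxProof4
/-- Fix `k ≥ 1` and letters `a₁,…,a_k` with `aᵢ ≠ aᵢ₊₁`.  The
MOn-1qfa `A[a₁,…,a_k]` recognizes `L[a₁,…,a_k] = Σ* a₁ Σ* ⋯ Σ* a_k Σ*` with cut-point
`λ = 2^{−(2k+1)}` isolated by `δ = 2^{−2(k+1)}`; more precisely `p(w) ≥ 2^{−2k}` for
`w ∈ L[a₁,…,a_k]` and `p(w) = 0` for `w ∉ L[a₁,…,a_k]`. -/
theorem autoPT_recognizes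
    (σ : Type) [Fintype σ] [Nonempty σ] [DecidableEq σ]
    (as : List σ) (hne : as ≠ []) (hchain : as.Chain' (· ≠ ·)) :
    (AutoPT as).Valid ∧
    (∀ w : List σ, as.Sublist w →
      (AutoPT as).prob w ≥ (2 : ℝ) ^ (-(2 * (as.length : ℤ)))) ∧
    (∀ w : List σ, ¬ as.Sublist w → (AutoPT as).prob w = 0) ∧
    (∀ w : List σ,
      |(AutoPT as).prob w - (2 : ℝ) ^ (-(2 * (as.length : ℤ) + 1))| ≥
        (2 : ℝ) ^ (-(2 * ((as.length : ℤ) + 1)))) ∧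
    {w : List σ | (AutoPT as).prob w > (2 : ℝ) ^ (-(2 * (as.length : ℤ) + 1))} =
      {w : List σ | as.Sublist w} := by
  have hch := hchain
  have hGI : ∀ w : List σ, GInv as (w.foldl (levStep as) 0) (dvec as w) :=
    fun w => GInv_foldl hch w 0 _ (GInv_init as)
  have hq4 : ∀ w : List σ, as.Sublist w → ((1 : ℝ) / 4) ^ as.length ≤ (AutoPT as).prob w := by
    intro w hsub
    have hlev : w.foldl (levStep as) 0 = as.length :=
      levStep_greedy w 0 (Nat.zero_le _) (by simpa using hsub)
    have h22 := (hGI w).2.2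
    rw [hlev] at h22
    rw [autoPT_prob as hch w]
    exact h22 (Fin.last as.length) (by simp)
  have hz : ∀ w : List σ, ¬ as.Sublist w → (AutoPT as).prob w = 0 := by
    intro w hsub
    have hle := foldl_levStep_le (as := as) w (Nat.zero_le _)
    have hne2 : w.foldl (levStep as) 0 ≠ as.length := by
      intro hE
      apply hsub
      have hs := levStep_sound (as := as) w 0 (Nat.zero_le _)
      rw [hE] at hs
      simpa using hs
    rw [autoPT_prob as hch w]
    exact (hGI w).2.1 (Fin.last as.length) (by simp only [Fin.val_last]; omega)
  have hq4' : ((1 : ℝ) / 4) ^ as.length = 2 ^ (-(2 * (as.length : ℤ))) := quarter_eq as.length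
  set t : ℝ := 2 ^ (-(2 * ((as.length : ℤ) + 1))) with htdef
  have ht0 : 0 < t := zpow_pos (by norm_num) _
  have hlam : (2 : ℝ) ^ (-(2 * (as.length : ℤ) + 1)) = 2 * t := by
    rw [htdef, show -(2 * (as.length : ℤ) + 1) = 1 + -(2 * ((as.length : ℤ) + 1)) by ring,
      zpow_add₀ (by norm_num : (2 : ℝ) ≠ 0), zpow_one]
  have h4t : (2 : ℝ) ^ (-(2 * (as.length : ℤ))) = 4 * t := by
    rw [htdef, show -(2 * (as.length : ℤ)) = 2 + -(2 * ((as.length : ℤ) + 1)) by ring,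
      zpow_add₀ (by norm_num : (2 : ℝ) ≠ 0)]
    norm_num
  refine ⟨autoPT_valid as hch, ?_, hz, ?_, ?_⟩
  · intro w hsub
    rw [ge_iff_le, ← hq4']
    exact hq4 w hsub
  · intro w
    by_cases hsub : as.Sublist w
    · have hp := hq4 w hsub
      rw [hq4', h4t] at hp
      rw [hlam, ge_iff_le, abs_of_nonneg (by linarith)]
      linarith
    · rw [hz w hsub, hlam, zero_sub, abs_neg, abs_of_nonneg (by linarith)]
      linarith
  · ext w
    simp only [Set.mem_setOf_eq]
    constructor
    · intro hgt
      by_contra hsub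
      rw [hz w hsub, hlam] at hgt
      linarith
    · intro hsub
      have hp := hq4 w hsub
      rw [hq4', h4t] at hp
      rw [hlam]
      linarith
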